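/- arXiv:1703.05318 — 2 statements merged into one kernel-verified Lean document; each statement's English description precedes it below -/
import Mathlib

section
/- Let v, a, b, c, d be points of ℝ³ such that b − v and c − v are linearly independent, and set m = (b − v) × (c − v), n₁ = (a − v) × (b − v), n₃ = (c − v) × (d − v). Assume ⟨a − v, m⟩ · ⟨d − v, m⟩ > 0, i.e., a and d lie strictly on the same side of the plane through v, b, c (the middle face is not an inflection face). Then the unoriented angle between the orthogonal projections of n₁ and n₃ onto the plane m⊥ equals π − ∠(b − v, c − v). (Lemma 2.3, cases (i)/(iii): the spherical angle of the Gauss image of a vertex star at the normal of a non-inflection face is π − α, respectively 3π − α for a reflex face angle; its unoriented representative is π minus the angle between the two edges.) -/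
open RealInnerProductSpace

noncomputable section

/-- Euclidean 3-space. -/
abbrev E3 : Type := EuclideanSpace ℝ (Fin 3)

/-- The cross product on `E3`. -/
noncomputable def cross3 (a b : E3) : E3 :=
  (WithLp.equiv 2 (Fin 3 → ℝ)).symm
    ![a 1 * b 2 - a 2 * b 1, a 2 * b 0 - a 0 * b 2, a 0 * b 1 - a 1 * b 0]

/-- The orthogonal projection of `z` onto the plane `m⊥`. -/
noncomputable def projPerp (m z : E3) : E3 := z - (⟪z, m⟫ / ⟪m, m⟫) • m

lemma inner3 (x y : E3) : ⟪x, y⟫ = x 0 * y 0 + x 1 * y 1 + x 2 * y 2 := by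
  simp [PiLp.inner_apply, Fin.sum_univ_three, RCLike.inner_apply]
  ring

lemma cross3_0 (a b : E3) : cross3 a b 0 = a 1 * b 2 - a 2 * b 1 := by simp [cross3]
lemma cross3_1 (a b : E3) : cross3 a b 1 = a 2 * b 0 - a 0 * b 2 := by simp [cross3]
lemma cross3_2 (a b : E3) : cross3 a b 2 = a 0 * b 1 - a 1 * b 0 := by simp [cross3]

lemma key1 (p q u : E3) :
    ⟪cross3 p q, cross3 p q⟫ • cross3 u p
      = ⟪cross3 u p, cross3 p q⟫ • cross3 p q
        + ⟪u, cross3 p q⟫ • cross3 (cross3 p q) p := by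
  refine PiLp.ext fun j => ?_
  match j with
  | 0 | 1 | 2 =>
    simp only [PiLp.add_apply, PiLp.smul_apply, smul_eq_mul, inner3, cross3_0, cross3_1, cross3_2]
    ring

lemma key2 (p q w : E3) :
    ⟪cross3 p q, cross3 p q⟫ • cross3 q w
      = ⟪cross3 q w, cross3 p q⟫ • cross3 p q
        + ⟪w, cross3 p q⟫ • cross3 q (cross3 p q) := by
  refine PiLp.ext fun j => ?_
  match j with
  | 0 | 1 | 2 =>
    simp only [PiLp.add_apply, PiLp.smul_apply, smul_eq_mul, inner3, cross3_0, cross3_1, cross3_2]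
    ring

lemma lagrange (m x y : E3) :
    ⟪cross3 m x, cross3 m y⟫ = ⟪m, m⟫ * ⟪x, y⟫ - ⟪m, x⟫ * ⟪m, y⟫ := by
  simp only [inner3, cross3_0, cross3_1, cross3_2]
  ring

lemma inner_cross_left (p q : E3) : ⟪cross3 p q, p⟫ = 0 := by
  simp only [inner3, cross3_0, cross3_1, cross3_2]; ring

lemma inner_cross_right (p q : E3) : ⟪cross3 p q, q⟫ = 0 := by
  simp only [inner3, cross3_0, cross3_1, cross3_2]; ring

lemma cross3_anticomm (x y : E3) : cross3 x y = -cross3 y x := by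
  refine PiLp.ext fun j => ?_
  match j with
  | 0 | 1 | 2 =>
    simp only [PiLp.neg_apply, cross3_0, cross3_1, cross3_2]
    ring

lemma cross3_zero_left (q : E3) : cross3 0 q = 0 := by
  refine PiLp.ext fun j => ?_
  match j with
  | 0 | 1 | 2 =>
    simp only [cross3_0, cross3_1, cross3_2, PiLp.zero_apply, zero_mul, mul_zero, sub_zero]

lemma cross3_zero_right (q : E3) : cross3 q 0 = 0 := by
  rw [cross3_anticomm, cross3_zero_left, neg_zero]

/-- From a decomposition `k • z = c • m + r • x` with `c = ⟪z, m⟫` and `k = ⟪m, m⟫ ≠ 0`,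
the projection of `z` onto `m⊥` equals `(r / k) • x`. -/
lemma projPerp_of_key (m z x : E3) (r : ℝ) (hk : ⟪m, m⟫ ≠ 0)
    (h : ⟪m, m⟫ • z = ⟪z, m⟫ • m + r • x) :
    projPerp m z = (r / ⟪m, m⟫) • x := by
  apply smul_right_injective E3 hk
  show ⟪m, m⟫ • (z - (⟪z, m⟫ / ⟪m, m⟫) • m) = ⟪m, m⟫ • ((r / ⟪m, m⟫) • x)
  rw [smul_sub, h, smul_smul, mul_div_cancel₀ _ hk, smul_smul, mul_div_cancel₀ _ hk]
  abel

lemma norm_cross_of_orth (m x : E3) (h : ⟪m, x⟫ = 0) : ‖cross3 m x‖ = ‖m‖ * ‖x‖ := by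
  have h2 : ‖cross3 m x‖ * ‖cross3 m x‖ = (‖m‖ * ‖x‖) * (‖m‖ * ‖x‖) := by
    rw [← real_inner_self_eq_norm_mul_norm, lagrange, h, mul_zero, sub_zero,
      real_inner_self_eq_norm_mul_norm, real_inner_self_eq_norm_mul_norm]
    ring
  exact (mul_self_inj (norm_nonneg _) (by positivity)).mp h2

lemma angle_cross (p q : E3) (hm : cross3 p q ≠ 0) (hp : p ≠ 0) (hq : q ≠ 0) :
    InnerProductGeometry.angle (cross3 (cross3 p q) p) (cross3 (cross3 p q) q)
      = InnerProductGeometry.angle p q := by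
  set m := cross3 p q with hmdef
  have hnm : ‖m‖ ≠ 0 := norm_ne_zero_iff.mpr hm
  have hnp : ‖p‖ ≠ 0 := norm_ne_zero_iff.mpr hp
  have hnq : ‖q‖ ≠ 0 := norm_ne_zero_iff.mpr hq
  unfold InnerProductGeometry.angle
  congr 1
  rw [lagrange, inner_cross_left, inner_cross_right, mul_zero, sub_zero,
    norm_cross_of_orth m p (inner_cross_left p q),
    norm_cross_of_orth m q (inner_cross_right p q),
    real_inner_self_eq_norm_mul_norm]
  field_simp

/-- Lemma 2.3, cases (i)/(iii): if the middle face of three consecutive faces of a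
vertex star is *not* an inflection face (`a` and `d` lie strictly on the same side
of the plane of the middle face), then the unoriented angle between the projections
of the outer face normals `n₁, n₃` onto the plane orthogonal to the middle face
normal `m` equals `π − ∠(b − v, c − v)`. -/
theorem stmt0 (v a b c d : E3)
    (hbc : LinearIndependent ℝ ![b - v, c - v])
    (hside : 0 < ⟪a - v, cross3 (b - v) (c - v)⟫ * ⟪d - v, cross3 (b - v) (c - v)⟫) :
    InnerProductGeometry.angle
        (projPerp (cross3 (b - v) (c - v)) (cross3 (a - v) (b - v)))
        (projPerp (cross3 (b - v) (c - v)) (cross3 (c - v) (d - v)))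
      = Real.pi - InnerProductGeometry.angle (b - v) (c - v) := by
  set p := b - v with hpdef
  set q := c - v with hqdef
  set u := a - v with hudef
  set w := d - v with hwdef
  set m := cross3 p q with hmdef
  have hm : m ≠ 0 := by
    intro h
    rw [h] at hside
    simp at hside
  have hk : (⟪m, m⟫ : ℝ) ≠ 0 := fun h => hm (inner_self_eq_zero.mp h)
  have hkpos : (0:ℝ) < ⟪m, m⟫ := lt_of_le_of_ne real_inner_self_nonneg (Ne.symm hk)
  have hp : p ≠ 0 := fun h => hm (by rw [hmdef, h, cross3_zero_left])
  have hq : q ≠ 0 := fun h => hm (by rw [hmdef, h, cross3_zero_right])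
  have h1 : projPerp m (cross3 u p) = (⟪u, m⟫ / ⟪m, m⟫) • cross3 m p :=
    projPerp_of_key m (cross3 u p) (cross3 m p) _ hk (key1 p q u)
  have h2 : projPerp m (cross3 q w) = (⟪w, m⟫ / ⟪m, m⟫) • cross3 q m :=
    projPerp_of_key m (cross3 q w) (cross3 q m) _ hk (key2 p q w)
  rw [h1, h2, cross3_anticomm q m, smul_neg, InnerProductGeometry.angle_neg_right]
  have hfin : InnerProductGeometry.angle ((⟪u, m⟫ / ⟪m, m⟫) • cross3 m p)
      ((⟪w, m⟫ / ⟪m, m⟫) • cross3 m q) = InnerProductGeometry.angle p q := by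
    rcases mul_pos_iff.mp hside with ⟨hu, hw⟩ | ⟨hu, hw⟩
    · rw [InnerProductGeometry.angle_smul_left_of_pos _ _ (div_pos hu hkpos),
        InnerProductGeometry.angle_smul_right_of_pos _ _ (div_pos hw hkpos)]
      exact angle_cross p q hm hp hq
    · rw [InnerProductGeometry.angle_smul_left_of_neg _ _ (div_neg_of_neg_of_pos hu hkpos),
        InnerProductGeometry.angle_smul_right_of_neg _ _ (div_neg_of_neg_of_pos hw hkpos),
        InnerProductGeometry.angle_neg_neg]
      exact angle_cross p q hm hp hq
  rw [hfin]
end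
end

section
/- Let v, a, b, c, d be points of ℝ³ such that b − v and c − v are linearly independent, and set m = (b − v) × (c − v), n₁ = (a − v) × (b − v), n₃ = (c − v) × (d − v). Assume ⟨a − v, m⟩ · ⟨d − v, m⟩ < 0, i.e., a and d lie strictly on opposite sides of the plane through v, b, c (the middle face is an inflection face). Then the unoriented angle between the orthogonal projections of n₁ and n₃ onto the plane m⊥ equals ∠(b − v, c − v). (Lemma 2.3, cases (ii)/(iv): the spherical angle of the Gauss image of a vertex star at the normal of an inflection face is 2π − α; its unoriented representative equals the angle between the two edges.) -/
open RealInnerProductSpace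

noncomputable section

lemma cross3_apply (a b : E3) (i : Fin 3) : cross3 a b i =
    ![a 1 * b 2 - a 2 * b 1, a 2 * b 0 - a 0 * b 2, a 0 * b 1 - a 1 * b 0] i := by
  simp [cross3]
lemma projA (p q u : E3) (hs : ⟪cross3 p q, cross3 p q⟫ ≠ 0) :
    projPerp (cross3 p q) (cross3 u p)
      = (⟪u, cross3 p q⟫ / ⟪cross3 p q, cross3 p q⟫) • cross3 (cross3 p q) p := by
  rw [inner3] at hs
  simp only [cross3_apply] at hs
  norm_num [Matrix.cons_val_two, Matrix.tail_cons, Matrix.head_cons] at hs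
  ext i
  simp only [projPerp, PiLp.sub_apply, PiLp.smul_apply, smul_eq_mul, inner3, cross3_apply]
  norm_num [Matrix.cons_val_two, Matrix.tail_cons, Matrix.head_cons]
  fin_cases i <;> simp <;> generalize hD : ((p.ofLp 1 * q.ofLp 2 - p.ofLp 2 * q.ofLp 1) * (p.ofLp 1 * q.ofLp 2 - p.ofLp 2 * q.ofLp 1) +
    (p.ofLp 2 * q.ofLp 0 - p.ofLp 0 * q.ofLp 2) * (p.ofLp 2 * q.ofLp 0 - p.ofLp 0 * q.ofLp 2) +
    (p.ofLp 0 * q.ofLp 1 - p.ofLp 1 * q.ofLp 0) * (p.ofLp 0 * q.ofLp 1 - p.ofLp 1 * q.ofLp 0)) = D at hs ⊢ <;>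
    field_simp <;> rw [← hD] <;> ring
lemma projB (p q w : E3) (hs : ⟪cross3 p q, cross3 p q⟫ ≠ 0) :
    projPerp (cross3 p q) (cross3 q w)
      = (-⟪w, cross3 p q⟫ / ⟪cross3 p q, cross3 p q⟫) • cross3 (cross3 p q) q := by
  rw [inner3] at hs
  simp only [cross3_apply] at hs
  norm_num [Matrix.cons_val_two, Matrix.tail_cons, Matrix.head_cons] at hs
  ext i
  simp only [projPerp, PiLp.sub_apply, PiLp.smul_apply, smul_eq_mul, inner3, cross3_apply]
  norm_num [Matrix.cons_val_two, Matrix.tail_cons, Matrix.head_cons]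
  fin_cases i <;> simp <;> generalize hD : ((p.ofLp 1 * q.ofLp 2 - p.ofLp 2 * q.ofLp 1) * (p.ofLp 1 * q.ofLp 2 - p.ofLp 2 * q.ofLp 1) +
    (p.ofLp 2 * q.ofLp 0 - p.ofLp 0 * q.ofLp 2) * (p.ofLp 2 * q.ofLp 0 - p.ofLp 0 * q.ofLp 2) +
    (p.ofLp 0 * q.ofLp 1 - p.ofLp 1 * q.ofLp 0) * (p.ofLp 0 * q.ofLp 1 - p.ofLp 1 * q.ofLp 0)) = D at hs ⊢ <;>
    field_simp <;> rw [← hD] <;> ring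
lemma inner_mm_p (p q : E3) :
    ⟪cross3 (cross3 p q) p, cross3 (cross3 p q) q⟫
      = ⟪cross3 p q, cross3 p q⟫ * ⟪p, q⟫ := by
  simp only [inner3, cross3_apply]; norm_num [Matrix.cons_val_two, Matrix.tail_cons, Matrix.head_cons]; ring
lemma inner_mp_self (p q : E3) :
    ⟪cross3 (cross3 p q) p, cross3 (cross3 p q) p⟫
      = ⟪cross3 p q, cross3 p q⟫ * ⟪p, p⟫ := by
  simp only [inner3, cross3_apply]; norm_num [Matrix.cons_val_two, Matrix.tail_cons, Matrix.head_cons]; ring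
lemma inner_mq_self (p q : E3) :
    ⟪cross3 (cross3 p q) q, cross3 (cross3 p q) q⟫
      = ⟪cross3 p q, cross3 p q⟫ * ⟪q, q⟫ := by
  simp only [inner3, cross3_apply]; norm_num [Matrix.cons_val_two, Matrix.tail_cons, Matrix.head_cons]; ring
lemma angle_mm (p q : E3) (hs : ⟪cross3 p q, cross3 p q⟫ ≠ 0) :
    InnerProductGeometry.angle (cross3 (cross3 p q) p) (cross3 (cross3 p q) q)
      = InnerProductGeometry.angle p q := by
  have hs' : (0:ℝ) < ⟪cross3 p q, cross3 p q⟫ :=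
    lt_of_le_of_ne real_inner_self_nonneg (Ne.symm hs)
  unfold InnerProductGeometry.angle
  congr 1
  rw [inner_mm_p, norm_eq_sqrt_real_inner (cross3 (cross3 p q) p),
    norm_eq_sqrt_real_inner (cross3 (cross3 p q) q), inner_mp_self, inner_mq_self,
    Real.sqrt_mul hs'.le, Real.sqrt_mul hs'.le,
    norm_eq_sqrt_real_inner p, norm_eq_sqrt_real_inner q,
    show Real.sqrt ⟪cross3 p q, cross3 p q⟫ * Real.sqrt ⟪p, p⟫ *
        (Real.sqrt ⟪cross3 p q, cross3 p q⟫ * Real.sqrt ⟪q, q⟫)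
      = Real.sqrt ⟪cross3 p q, cross3 p q⟫ * Real.sqrt ⟪cross3 p q, cross3 p q⟫ *
        (Real.sqrt ⟪p, p⟫ * Real.sqrt ⟪q, q⟫) by ring,
    Real.mul_self_sqrt hs'.le, mul_div_mul_left _ _ hs]

/-- Lemma 2.3, cases (ii)/(iv): if the middle face of three consecutive faces of a
vertex star *is* an inflection face (`a` and `d` lie strictly on opposite sides
of the plane of the middle face), then the unoriented angle between the projections
of the outer face normals `n₁, n₃` onto the plane orthogonal to the middle face
normal `m` equals `∠(b − v, c − v)`. -/
theorem stmt1 (v a b c d : E3)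
    (hbc : LinearIndependent ℝ ![b - v, c - v])
    (hside : ⟪a - v, cross3 (b - v) (c - v)⟫ * ⟪d - v, cross3 (b - v) (c - v)⟫ < 0) :
    InnerProductGeometry.angle
        (projPerp (cross3 (b - v) (c - v)) (cross3 (a - v) (b - v)))
        (projPerp (cross3 (b - v) (c - v)) (cross3 (c - v) (d - v)))
      = InnerProductGeometry.angle (b - v) (c - v) := by
  set p := b - v
  set q := c - v
  set u := a - v
  set w := d - v
  set m := cross3 p q with hm
  have hs : ⟪m, m⟫ ≠ 0 := by
    intro h
    have hm0 : m = 0 := by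
      have := inner_self_eq_zero (𝕜 := ℝ) (x := m)
      exact this.mp h
    rw [hm0] at hside
    simp at hside
  have hs' : (0:ℝ) < ⟪m, m⟫ := lt_of_le_of_ne real_inner_self_nonneg (Ne.symm hs)
  rw [projA p q u hs, projB p q w hs]
  rcases lt_or_gt_of_ne (fun h : ⟪u, m⟫ = 0 => by rw [h] at hside; simp at hside) with hu | hu
  · -- ⟪u,m⟫ < 0, so ⟪w,m⟫ > 0
    have hw : 0 < ⟪w, m⟫ := by nlinarith
    have h1 : ⟪u, m⟫ / ⟪m, m⟫ < 0 := div_neg_of_neg_of_pos hu hs'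
    have h3 : -⟪w, m⟫ / ⟪m, m⟫ < 0 := div_neg_of_neg_of_pos (by linarith) hs'
    rw [InnerProductGeometry.angle_smul_left_of_neg _ _ h1,
      InnerProductGeometry.angle_smul_right_of_neg _ _ h3,
      InnerProductGeometry.angle_neg_neg]
    exact angle_mm p q hs
  · have hw : ⟪w, m⟫ < 0 := by nlinarith
    have h1 : 0 < ⟪u, m⟫ / ⟪m, m⟫ := div_pos hu hs'
    have h3 : 0 < -⟪w, m⟫ / ⟪m, m⟫ := div_pos (by linarith) hs'
    rw [InnerProductGeometry.angle_smul_left_of_pos _ _ h1,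
      InnerProductGeometry.angle_smul_right_of_pos _ _ h3]
    exact angle_mm p q hs
end
end
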